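/- Let p = (p_1, …, p_N) and q = (q_1, …, q_N) be configurations of N points in Euclidean space E^D such that q is an expansion of p, and let r_1, …, r_N ≥ 0. If for some indices i, j, l the balls satisfy B_D(q_i, r_i) ∩ B_D(q_j, r_j) ∩ B_D(q_l, r_l) ≠ ∅, then also B_D(p_i, r_i) ∩ B_D(p_j, r_j) ∩ B_D(p_l, r_l) ≠ ∅. In other words, under an expansion of the centers no new triple intersections of the balls can appear. -/

import Mathlib

open Metric Finset RealInnerProductSpace

variable {E : Type*} [NormedAddCommGroup E] [InnerProductSpace ℝ E]

lemma variance_identity {ι : Type*} (t : Finset ι) (w : ι → ℝ) (a : ι → E) (c : E)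
    (hw1 : ∑ m ∈ t, w m = 1) :
    ∑ m ∈ t, ∑ n ∈ t, w m * w n * ‖a m - a n‖ ^ 2
      = 2 * ∑ m ∈ t, w m * ‖a m - c‖ ^ 2 - 2 * ‖∑ m ∈ t, w m • (a m - c)‖ ^ 2 := by
  have expand : ∀ m n, w m * w n * ‖a m - a n‖ ^ 2 =
      w m * ‖a m - c‖ ^ 2 * w n + w m * (w n * ‖a n - c‖ ^ 2)
        - 2 * ⟪w m • (a m - c), w n • (a n - c)⟫ := by
    intro m n
    have h1 : a m - a n = (a m - c) - (a n - c) := by abel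
    rw [h1, norm_sub_sq_real, real_inner_smul_left, real_inner_smul_right]
    ring
  have step : ∑ m ∈ t, ∑ n ∈ t, w m * w n * ‖a m - a n‖ ^ 2
      = ∑ m ∈ t, (w m * ‖a m - c‖ ^ 2 * ∑ n ∈ t, w n
          + w m * ∑ n ∈ t, w n * ‖a n - c‖ ^ 2
          - 2 * ⟪w m • (a m - c), ∑ n ∈ t, w n • (a n - c)⟫) := by
    refine Finset.sum_congr rfl fun m _ => ?_
    rw [Finset.mul_sum, Finset.mul_sum, inner_sum, Finset.mul_sum, ← Finset.sum_add_distrib,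
      ← Finset.sum_sub_distrib]
    exact Finset.sum_congr rfl fun n _ => expand m n
  rw [step]
  rw [Finset.sum_sub_distrib, Finset.sum_add_distrib, ← Finset.sum_mul, ← Finset.sum_mul,
    ← Finset.mul_sum, ← sum_inner, real_inner_self_eq_norm_sq, hw1]
  ring

lemma core_contradiction {ι : Type*} (t : Finset ι) (w : ι → ℝ) (P Q : ι → E) (x y : E) (c : ℝ)
    (hw0 : ∀ m ∈ t, 0 ≤ w m) (hw1 : ∑ m ∈ t, w m = 1)
    (hy : ∑ m ∈ t, w m • P m = y)
    (hPQ : ∀ m ∈ t, ∀ n ∈ t, ‖P m - P n‖ ≤ ‖Q m - Q n‖)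
    (hact : ∀ m ∈ t, ‖y - P m‖ ^ 2 = c + ‖x - Q m‖ ^ 2) : c ≤ 0 := by
  have hP := variance_identity t w P y hw1
  have hQ := variance_identity t w Q x hw1
  have hzero : ∑ m ∈ t, w m • (P m - y) = 0 := by
    simp only [smul_sub, Finset.sum_sub_distrib, hy, ← Finset.sum_smul, hw1, one_smul, sub_self]
  rw [hzero, norm_zero] at hP
  have hPsum : ∑ m ∈ t, w m * ‖P m - y‖ ^ 2 = c + ∑ m ∈ t, w m * ‖x - Q m‖ ^ 2 := by
    have : ∀ m ∈ t, w m * ‖P m - y‖ ^ 2 = w m * c + w m * ‖x - Q m‖ ^ 2 := by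
      intro m hm
      rw [norm_sub_rev, hact m hm]; ring
    rw [Finset.sum_congr rfl this, Finset.sum_add_distrib, ← Finset.sum_mul, hw1, one_mul]
  have hle : ∑ m ∈ t, ∑ n ∈ t, w m * w n * ‖P m - P n‖ ^ 2
      ≤ ∑ m ∈ t, ∑ n ∈ t, w m * w n * ‖Q m - Q n‖ ^ 2 := by
    refine Finset.sum_le_sum fun m hm => Finset.sum_le_sum fun n hn => ?_
    have := hPQ m hm n hn
    have h0 : (0:ℝ) ≤ w m * w n := mul_nonneg (hw0 m hm) (hw0 n hn)
    have h1 : ‖P m - P n‖ ^ 2 ≤ ‖Q m - Q n‖ ^ 2 := by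
      have := norm_nonneg (P m - P n); nlinarith
    exact mul_le_mul_of_nonneg_left h1 h0
  have hQsum : ∑ m ∈ t, w m * ‖Q m - x‖ ^ 2 = ∑ m ∈ t, w m * ‖x - Q m‖ ^ 2 := by
    refine Finset.sum_congr rfl fun m _ => by rw [norm_sub_rev]
  have hnn : (0:ℝ) ≤ ‖∑ m ∈ t, w m • (Q m - x)‖ ^ 2 := by positivity
  rw [hP, hQ, hQsum] at hle
  rw [hPsum] at hle
  linarith

lemma kirszbraun_finset {D : ℕ} {ι : Type*} [DecidableEq ι] (s : Finset ι) (hs : s.Nonempty)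
    (p q : ι → EuclideanSpace ℝ (Fin D)) (x : EuclideanSpace ℝ (Fin D))
    (hpq : ∀ k ∈ s, ∀ m ∈ s, dist (p k) (p m) ≤ dist (q k) (q m)) :
    ∃ y, ∀ k ∈ s, dist y (p k) ≤ dist x (q k) := by
  classical
  set d : ι → ℝ := fun k => dist x (q k) with hd
  set f : EuclideanSpace ℝ (Fin D) → ℝ :=
    fun y => s.sup' hs (fun k => ‖y - p k‖ ^ 2 - d k ^ 2) with hf
  have hfcont : Continuous f := by
    rw [continuous_iff_continuousAt]
    intro y
    rw [hf]
    exact ContinuousAt.finset_sup'_apply hs fun k _ => by fun_prop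
  obtain ⟨k0, hk0⟩ := id hs
  set R : ℝ := |f (p k0)| + d k0 ^ 2 + 1 with hR
  have hR1 : (1:ℝ) ≤ R := by
    have h1 := abs_nonneg (f (p k0))
    have h2 := sq_nonneg (d k0)
    rw [hR]; linarith
  obtain ⟨y, hyK, hymin⟩ := (isCompact_closedBall (p k0) R).exists_isMinOn
    ⟨p k0, mem_closedBall_self (by positivity)⟩ hfcont.continuousOn
  have hglob : ∀ z, f y ≤ f z := by
    intro z
    by_cases hz : z ∈ closedBall (p k0) R
    · exact hymin hz
    · have hdist : R < dist z (p k0) := by simpa [mem_closedBall] using hz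
      have h1 : R ≤ ‖z - p k0‖ ^ 2 := by
        rw [← dist_eq_norm]
        nlinarith
      have h2 : f (p k0) < ‖z - p k0‖ ^ 2 - d k0 ^ 2 := by
        have := abs_nonneg (f (p k0))
        have := le_abs_self (f (p k0))
        nlinarith
      have h3 : ‖z - p k0‖ ^ 2 - d k0 ^ 2 ≤ f z := by
        simp only [hf]; exact Finset.le_sup' (fun k => ‖z - p k‖ ^ 2 - d k ^ 2) hk0
      have h4 : f y ≤ f (p k0) := hymin (mem_closedBall_self (by positivity))
      linarith
  -- active set
  set S : Finset ι := s.filter (fun k => f y = ‖y - p k‖ ^ 2 - d k ^ 2) with hS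
  have hSsub : S ⊆ s := Finset.filter_subset _ _
  have hSne : S.Nonempty := by
    obtain ⟨k1, hk1, hk1'⟩ := Finset.exists_mem_eq_sup' hs (fun k => ‖y - p k‖ ^ 2 - d k ^ 2)
    exact ⟨k1, Finset.mem_filter.2 ⟨hk1, hk1'⟩⟩
  -- y lies in convex hull of active centers
  have hy_hull : y ∈ convexHull ℝ (p '' (S : Set ι)) := by
    by_contra hy_hull
    set K : Set (EuclideanSpace ℝ (Fin D)) := convexHull ℝ (p '' (S : Set ι)) with hK
    have hKconv : Convex ℝ K := convex_convexHull _ _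
    have hKcomp : IsCompact K := ((S.finite_toSet.image p).isCompact_convexHull ℝ)
    have hKne : K.Nonempty := by
      obtain ⟨k1, hk1⟩ := hSne
      exact ⟨p k1, subset_convexHull _ _ ⟨k1, by simpa using hk1, rfl⟩⟩
    obtain ⟨z, hzK, hz⟩ := exists_norm_eq_iInf_of_complete_convex hKne
      hKcomp.isClosed.isComplete hKconv y
    rw [norm_eq_iInf_iff_real_inner_le_zero hKconv hzK] at hz
    set v : EuclideanSpace ℝ (Fin D) := z - y with hv
    have hvne : v ≠ 0 := by
      intro h0
      exact hy_hull (by rwa [show z = y from by rwa [sub_eq_zero] at h0] at hzK)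
    have hvpos : (0:ℝ) < ‖v‖ ^ 2 := pow_pos (norm_pos_iff.mpr hvne) 2
    -- inner product bound for active indices
    have hact_inner : ∀ k ∈ S, ⟪y - p k, v⟫ ≤ -‖v‖ ^ 2 := by
      intro k hk
      have h1 : ⟪y - z, p k - z⟫ ≤ 0 :=
        hz (p k) (subset_convexHull _ _ ⟨k, by simpa using hk, rfl⟩)
      have h2 : ⟪y - p k, v⟫ = ⟪y - z, v⟫ + ⟪z - p k, v⟫ := by
        rw [← inner_add_left, show y - z + (z - p k) = y - p k from by abel]
      have h3 : ⟪y - z, v⟫ = -‖v‖ ^ 2 := by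
        rw [hv, show y - z = -(z - y) from by abel, inner_neg_left,
          real_inner_self_eq_norm_sq]
      have h4 : ⟪z - p k, v⟫ = ⟪y - z, p k - z⟫ := by
        rw [hv, show z - p k = -(p k - z) from by abel,
          show z - y = -(y - z) from by abel, inner_neg_neg, real_inner_comm]
      rw [h2, h3, h4]
      linarith
    -- choose step size
    set g : ι → ℝ := fun k => f y - (‖y - p k‖ ^ 2 - d k ^ 2) with hg
    have hg0 : ∀ k ∈ s, 0 ≤ g k := by
      intro k hk
      have h1 : ‖y - p k‖ ^ 2 - d k ^ 2 ≤ f y := by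
        simp only [hf]; exact Finset.le_sup' (fun k => ‖y - p k‖ ^ 2 - d k ^ 2) hk
      simp only [hg]; linarith
    have hgpos : ∀ k ∈ s, k ∉ S → 0 < g k := by
      intro k hk hkS
      rcases lt_or_eq_of_le (hg0 k hk) with h | h
      · exact h
      · exfalso
        apply hkS
        rw [hS, Finset.mem_filter]
        refine ⟨hk, ?_⟩
        have h' : g k = 0 := h.symm
        simp only [hg] at h'
        linarith
    set M : ι → ℝ := fun k => 2 * |⟪y - p k, v⟫| + ‖v‖ ^ 2 + 1 with hM
    have hMpos : ∀ k, 0 < M k := fun k => by positivity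
    set tk : ι → ℝ := fun k => if k ∈ S then 1 else min 1 (g k / M k) with htk
    set t0 : ℝ := s.inf' hs tk with ht0
    have ht0pos : 0 < t0 := by
      rw [ht0, Finset.lt_inf'_iff]
      intro k hk
      by_cases hkS : k ∈ S
      · simp [htk, hkS]
      · simp only [htk, hkS, if_false, lt_min_iff]
        exact ⟨one_pos, div_pos (hgpos k hk hkS) (hMpos k)⟩
    have ht0le1 : t0 ≤ 1 := by
      rcases hSne with ⟨k1, hk1⟩
      calc t0 ≤ tk k1 := Finset.inf'_le _ (hSsub hk1)
        _ = 1 := by simp [htk, hk1]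
    -- each term strictly decreases
    have hkey : ∀ k ∈ s, ‖(y + t0 • v) - p k‖ ^ 2 - d k ^ 2 < f y := by
      intro k hk
      have hexpand : ‖(y + t0 • v) - p k‖ ^ 2
          = ‖y - p k‖ ^ 2 + 2 * (t0 * ⟪y - p k, v⟫) + t0 ^ 2 * ‖v‖ ^ 2 := by
        rw [show (y + t0 • v) - p k = (y - p k) + t0 • v from by abel, norm_add_sq_real,
          real_inner_smul_right, norm_smul]
        rw [Real.norm_eq_abs, abs_of_pos ht0pos]
        ring
      by_cases hkS : k ∈ S
      · have hfk : f y = ‖y - p k‖ ^ 2 - d k ^ 2 := (Finset.mem_filter.1 hkS).2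
        have hip := hact_inner k hkS
        have h5 : t0 * ⟪y - p k, v⟫ ≤ t0 * (-‖v‖ ^ 2) :=
          mul_le_mul_of_nonneg_left hip ht0pos.le
        have h6 : t0 ^ 2 * ‖v‖ ^ 2 ≤ t0 * ‖v‖ ^ 2 := by
          nlinarith [mul_nonneg (mul_nonneg (sub_nonneg.2 ht0le1) ht0pos.le) hvpos.le]
        have h7 : 0 < t0 * ‖v‖ ^ 2 := mul_pos ht0pos hvpos
        rw [hexpand]
        linarith
      · have hgk := hgpos k hk hkS
        have ht0k : t0 ≤ g k / M k := by
          calc t0 ≤ tk k := Finset.inf'_le _ hk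
            _ ≤ g k / M k := by simp [htk, hkS]
        have ht0M : t0 * M k ≤ g k := by
          rw [← le_div_iff₀ (hMpos k)]; exact ht0k
        have hb : 2 * ⟪y - p k, v⟫ + t0 * ‖v‖ ^ 2 ≤ M k - 1 := by
          have h1 : ⟪y - p k, v⟫ ≤ |⟪y - p k, v⟫| := le_abs_self _
          have h2 : t0 * ‖v‖ ^ 2 ≤ ‖v‖ ^ 2 := by nlinarith
          simp only [hM]; linarith
        have hfk : ‖y - p k‖ ^ 2 - d k ^ 2 = f y - g k := by simp only [hg]; ring
        have : t0 * (2 * ⟪y - p k, v⟫ + t0 * ‖v‖ ^ 2) ≤ t0 * (M k - 1) :=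
          mul_le_mul_of_nonneg_left hb ht0pos.le
        nlinarith
    have hlt : f (y + t0 • v) < f y := by
      have h := (Finset.sup'_lt_iff hs).mpr hkey
      exact h
    exact absurd (hglob (y + t0 • v)) (not_le.2 hlt)
  -- extract convex combination and conclude f y ≤ 0
  have hfy_le : f y ≤ 0 := by
    rw [_root_.convexHull_eq] at hy_hull
    obtain ⟨ι', t, w, z, hw0, hw1, hzS, hcm⟩ := hy_hull
    have hch : ∀ m ∈ t, ∃ kk, kk ∈ S ∧ p kk = z m := by
      intro m hm
      obtain ⟨kk, hkk, hpk⟩ := hzS m hm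
      exact ⟨kk, by simpa using hkk, hpk⟩
    set kf : ι' → ι := fun m => if h : ∃ kk, kk ∈ S ∧ p kk = z m then h.choose else k0 with hkf
    have hkfS : ∀ m ∈ t, kf m ∈ S ∧ p (kf m) = z m := by
      intro m hm
      have h := hch m hm
      simp only [hkf, dif_pos h]
      exact h.choose_spec
    refine core_contradiction t w (fun m => p (kf m)) (fun m => q (kf m)) x y (f y)
      hw0 hw1 ?_ ?_ ?_
    · rw [← hcm, Finset.centerMass_eq_of_sum_1 _ _ hw1]
      exact Finset.sum_congr rfl fun m hm => by
        show w m • p (kf m) = w m • z m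
        rw [(hkfS m hm).2]
    · intro m hm n hn
      have h1 := hpq (kf m) (hSsub (hkfS m hm).1) (kf n) (hSsub (hkfS n hn).1)
      rwa [dist_eq_norm, dist_eq_norm] at h1
    · intro m hm
      have hact : f y = ‖y - p (kf m)‖ ^ 2 - d (kf m) ^ 2 :=
        (Finset.mem_filter.1 (hkfS m hm).1).2
      have hdk : d (kf m) = ‖x - q (kf m)‖ := by simp only [hd]; exact dist_eq_norm _ _
      rw [← hdk]; linarith [hact]
  refine ⟨y, fun k hk => ?_⟩
  have h1 : ‖y - p k‖ ^ 2 - d k ^ 2 ≤ f y := by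
    simp only [hf]; exact Finset.le_sup' (fun k => ‖y - p k‖ ^ 2 - d k ^ 2) hk
  have h2 : ‖y - p k‖ ^ 2 ≤ d k ^ 2 := by linarith
  have h3 : 0 ≤ d k := dist_nonneg
  rw [dist_eq_norm]
  nlinarith [norm_nonneg (y - p k)]

/-- Under an expansion of the centers no new triple intersections of the balls can appear:
if `q` is an expansion of `p` and some three of the balls around `q` have a common point,
then the corresponding three balls around `p` also have a common point. -/
theorem no_new_triple_intersections_under_expansion
    (D N : ℕ) (p q : Fin N → EuclideanSpace ℝ (Fin D)) (r : Fin N → ℝ)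
    (hr : ∀ i, 0 ≤ r i)
    (hexp : ∀ i j : Fin N, i < j → dist (p i) (p j) ≤ dist (q i) (q j))
    (i j l : Fin N)
    (h : (closedBall (q i) (r i) ∩ closedBall (q j) (r j) ∩
      closedBall (q l) (r l)).Nonempty) :
    (closedBall (p i) (r i) ∩ closedBall (p j) (r j) ∩
      closedBall (p l) (r l)).Nonempty := by
  obtain ⟨x, hx⟩ := h
  have hx1 : dist x (q i) ≤ r i := hx.1.1
  have hx2 : dist x (q j) ≤ r j := hx.1.2
  have hx3 : dist x (q l) ≤ r l := hx.2
  have hpq' : ∀ k m : Fin N, dist (p k) (p m) ≤ dist (q k) (q m) := by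
    intro k m
    rcases lt_trichotomy k m with h' | h' | h'
    · exact hexp k m h'
    · subst h'; simp
    · rw [dist_comm, dist_comm (q k)]; exact hexp m k h'
  obtain ⟨y, hy⟩ := kirszbraun_finset ({i, j, l} : Finset (Fin N))
    ⟨i, by simp⟩ p q x (fun k _ m _ => hpq' k m)
  exact ⟨y, ⟨⟨le_trans (hy i (by simp)) hx1, le_trans (hy j (by simp)) hx2⟩,
    le_trans (hy l (by simp)) hx3⟩⟩
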